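/- (Strict support of the tangent hyperplane.) Let x* ∈ B with x*_i > 0 for all i, and let y* ∈ B with s(y*, N̄) ≠ s(x*, N̄). Then ∑_{i=1}^n b_i(x*) s_i(y*, N̄) > 1/∏_{j=1}^n (1 + x*_j), where b_i(x) = (1/(L_i N̄_i)) ((N̄_i − 1)/∏_{j=1}^n (1 + x_j) + 1/(1 + x_i)). -/

import Mathlib

open Finset

noncomputable def Xfun (n : ℕ) (a : ℝ) (x N : Fin n → ℝ) : ℝ :=
  a + (∑ k, (N k - 1) * x k) + (∏ k, (1 + x k)) - 1

noncomputable def sVec (n : ℕ) (a : ℝ) (L x N : Fin n → ℝ) : Fin n → ℝ :=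
  fun i => N i * L i * x i / Xfun n a x N

noncomputable def hfun (n : ℕ) (a : ℝ) (x : Fin n → ℝ) : ℝ :=
  (∑ i, x i / (1 + x i)) + (1 - a) / ∏ j, (1 + x j)

def rateRegion (n : ℕ) (a : ℝ) (L Nlo Nhi : Fin n → ℝ) : Set (Fin n → ℝ) :=
  {u | ∃ x N : Fin n → ℝ, (∀ i, 0 ≤ x i) ∧ (∀ i, Nlo i ≤ N i ∧ N i ≤ Nhi i) ∧
    u = sVec n a L x N}

noncomputable def alpha (n : ℕ) (L Nhi xs : Fin n → ℝ) (i : Fin n) : ℝ :=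
  (Nhi i - 1 + ∏ j ∈ Finset.univ.erase i, (1 + xs j)) / (L i * Nhi i)

def Cset (n : ℕ) (L Nhi xs : Fin n → ℝ) : Set (Fin n → ℝ) :=
  {sv | (∀ i, 0 ≤ sv i) ∧ ∑ i, alpha n L Nhi xs i * sv i ≤ 1}

noncomputable def bvec (n : ℕ) (L Nhi x : Fin n → ℝ) (i : Fin n) : ℝ :=
  (1 / (L i * Nhi i)) * ((Nhi i - 1) / (∏ j, (1 + x j)) + 1 / (1 + x i))

section Aux

private lemma convex_pos {u v t : ℝ} (hu : 0 < u) (hv : 0 < v) (ht : t ∈ Set.Icc (0:ℝ) 1) :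
    0 < (1 - t) * u + t * v := by
  rcases lt_or_ge t 1 with h | h
  · have h1 : 0 < (1 - t) * u := mul_pos (by linarith) hu
    have h2 : 0 ≤ t * v := mul_nonneg ht.1 hv.le
    linarith
  · have : t = 1 := le_antisymm ht.2 h
    subst this
    simpa using hv

private lemma cs_key {n : ℕ} (ρ e : Fin n → ℝ) (hρ : ∀ i, 0 ≤ ρ i)
    (hσ : 0 < ∑ i, ρ i)
    (hcon : ∑ i, e i * ((∑ j, ρ j) - ρ i) = 0)
    (htwo : ∃ i j, i ≠ j ∧ e i ≠ 0 ∧ e j ≠ 0) :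
    (∑ i, e i) ^ 2 < ∑ i, e i ^ 2 := by
  obtain ⟨i1, j1, hij, hei, hej⟩ := htwo
  have he2pos : 0 < ∑ i, e i ^ 2 :=
    Finset.sum_pos' (fun i _ => sq_nonneg _) ⟨i1, mem_univ _, by positivity⟩
  have hconsum : ∑ i, e i * ρ i = (∑ i, e i) * (∑ j, ρ j) := by
    have h1 : ∑ i, e i * ((∑ j, ρ j) - ρ i)
        = (∑ i, e i) * (∑ j, ρ j) - ∑ i, e i * ρ i := by
      rw [Finset.sum_mul]
      rw [← Finset.sum_sub_distrib]
      exact Finset.sum_congr rfl fun i _ => by ring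
    rw [h1] at hcon
    linarith
  by_cases hone : ∃ i0, ∀ j, j ≠ i0 → ρ j = 0
  · obtain ⟨i0, h0⟩ := hone
    have hz : ∑ j ∈ univ.erase i0, ρ j = 0 :=
      Finset.sum_eq_zero fun j hj => h0 j (Finset.ne_of_mem_erase hj)
    have hσval : (∑ j, ρ j) = ρ i0 := by
      rw [← Finset.add_sum_erase univ ρ (mem_univ i0), hz, add_zero]
    have herase : ∑ j ∈ univ.erase i0, e j = 0 := by
      have h2 : ∑ i, e i * ((∑ j, ρ j) - ρ i)
          = (∑ j, ρ j) * ∑ j ∈ univ.erase i0, e j := by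
        rw [← Finset.add_sum_erase univ _ (mem_univ i0)]
        rw [Finset.mul_sum]
        have h3 : ∀ j ∈ univ.erase i0, e j * ((∑ k, ρ k) - ρ j)
            = (∑ k, ρ k) * e j := fun j hj => by
          rw [h0 j (Finset.ne_of_mem_erase hj)]; ring
        rw [Finset.sum_congr rfl h3]
        rw [hσval]; ring
      rw [hcon] at h2
      rcases mul_eq_zero.mp h2.symm with h | h
      · exact absurd h (ne_of_gt hσ)
      · exact h
    have hs : (∑ i, e i) = e i0 := by
      rw [← Finset.add_sum_erase univ e (mem_univ i0), herase, add_zero]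
    have hj0 : ∃ j0, j0 ≠ i0 ∧ e j0 ≠ 0 := by
      rcases eq_or_ne i1 i0 with h | h
      · exact ⟨j1, by rw [← h]; exact hij.symm, hej⟩
      · exact ⟨i1, h, hei⟩
    obtain ⟨j0, hj0ne, hj0e⟩ := hj0
    have hmem : j0 ∈ univ.erase i0 := Finset.mem_erase.mpr ⟨hj0ne, mem_univ _⟩
    have hle : e j0 ^ 2 ≤ ∑ j ∈ univ.erase i0, e j ^ 2 :=
      Finset.single_le_sum (fun j _ => sq_nonneg (e j)) hmem
    have hsplit : ∑ i, e i ^ 2 = e i0 ^ 2 + ∑ j ∈ univ.erase i0, e j ^ 2 :=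
      (Finset.add_sum_erase univ (fun i => e i ^ 2) (mem_univ i0)).symm
    have hj0pos : 0 < e j0 ^ 2 := by positivity
    rw [hs, hsplit]
    linarith
  · push_neg at hone
    obtain ⟨p, -, hp⟩ := Finset.exists_lt_of_sum_lt (f := fun _ => (0:ℝ))
      (by simpa using hσ)
    obtain ⟨q, hqp, hq0⟩ := hone p
    have hq : 0 < ρ q := lt_of_le_of_ne (hρ q) (Ne.symm hq0)
    have hsum2 : ρ p + ρ q ≤ ∑ j, ρ j := by
      have hsub : ({p, q} : Finset (Fin n)) ⊆ univ := Finset.subset_univ _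
      have := Finset.sum_le_sum_of_subset_of_nonneg hsub (fun i _ _ => hρ i)
      rwa [Finset.sum_pair (Ne.symm hqp)] at this
    have hρsq : ∑ i, ρ i ^ 2 < (∑ j, ρ j) ^ 2 := by
      have hterm : ∀ i ∈ univ, ρ i ^ 2 ≤ ρ i * (∑ j, ρ j) := fun i _ => by
        have h5 : ρ i ≤ ∑ j, ρ j := Finset.single_le_sum (fun j _ => hρ j) (mem_univ i)
        nlinarith [hρ i]
      have hstrict : ρ p ^ 2 < ρ p * (∑ j, ρ j) := by nlinarith
      have h6 := Finset.sum_lt_sum hterm ⟨p, mem_univ p, hstrict⟩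
      calc ∑ i, ρ i ^ 2 < ∑ i, ρ i * (∑ j, ρ j) := h6
        _ = (∑ j, ρ j) ^ 2 := by rw [← Finset.sum_mul]; ring
    have hcs := Finset.sum_mul_sq_le_sq_mul_sq univ e ρ
    have h7 : ((∑ i, e i) * (∑ j, ρ j)) ^ 2 < (∑ i, e i ^ 2) * (∑ j, ρ j) ^ 2 := by
      calc ((∑ i, e i) * (∑ j, ρ j)) ^ 2 = (∑ i, e i * ρ i) ^ 2 := by rw [hconsum]
        _ ≤ (∑ i, e i ^ 2) * (∑ i, ρ i ^ 2) := hcs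
        _ < (∑ i, e i ^ 2) * (∑ j, ρ j) ^ 2 := mul_lt_mul_of_pos_left hρsq he2pos
    have hσ2 : 0 < (∑ j, ρ j) ^ 2 := by positivity
    have h8 : (∑ i, e i) ^ 2 * (∑ j, ρ j) ^ 2 < (∑ i, e i ^ 2) * (∑ j, ρ j) ^ 2 := by
      calc (∑ i, e i) ^ 2 * (∑ j, ρ j) ^ 2 = ((∑ i, e i) * (∑ j, ρ j)) ^ 2 := by ring
        _ < (∑ i, e i ^ 2) * (∑ j, ρ j) ^ 2 := h7
    exact lt_of_mul_lt_mul_right h8 hσ2.le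

open Set Filter Topology in
private lemma oneD (g g1 g2 : ℝ → ℝ)
    (hg : ∀ t ∈ Set.Icc (0:ℝ) 1, HasDerivAt g (g1 t) t)
    (hg1 : ∀ t ∈ Set.Icc (0:ℝ) 1, HasDerivAt g1 (g2 t) t)
    (hkey : ∀ t ∈ Set.Icc (0:ℝ) 1, g1 t = 0 → 0 < g2 t)
    (heq : g 0 = g 1) : g1 0 < 0 := by
  have hcont : ContinuousOn g (Set.Icc 0 1) :=
    fun x hx => (hg x hx).continuousAt.continuousWithinAt
  have push : ∀ τ ∈ Set.Ico (0:ℝ) 1, 0 ≤ g1 τ → ∃ t ∈ Set.Ioc τ 1, g τ < g t := by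
    intro τ hτ hpos
    have hτ' : τ ∈ Set.Icc (0:ℝ) 1 := ⟨hτ.1, hτ.2.le⟩
    have hIoc : Set.Ioc τ 1 ∈ 𝓝[>] τ := Ioc_mem_nhdsGT_of_mem ⟨le_refl τ, hτ.2⟩
    rcases hpos.lt_or_eq with h | h
    · have hs := hasDerivAt_iff_tendsto_slope.mp (hg τ hτ')
      have hev1 : ∀ᶠ t in 𝓝[≠] τ, 0 < slope g τ t := hs.eventually (eventually_gt_nhds h)
      have hev : ∀ᶠ t in 𝓝[>] τ, 0 < slope g τ t :=
        hev1.filter_mono (nhdsWithin_mono τ fun x hx => hx.ne')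
      obtain ⟨t, hslope, htmem⟩ := (hev.and (Filter.eventually_of_mem hIoc fun x hx => hx)).exists
      refine ⟨t, htmem, ?_⟩
      have hts : τ < t := htmem.1
      rw [slope_def_field] at hslope
      have h6 := mul_pos hslope (sub_pos.mpr hts)
      rw [div_mul_cancel₀ _ (ne_of_gt (sub_pos.mpr hts))] at h6
      linarith
    · have hk := hkey τ hτ' h.symm
      have hs := hasDerivAt_iff_tendsto_slope.mp (hg1 τ hτ')
      have hev1 : ∀ᶠ t in 𝓝[≠] τ, 0 < slope g1 τ t := hs.eventually (eventually_gt_nhds hk)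
      have hev : ∀ᶠ t in 𝓝[>] τ, 0 < g1 t := by
        have h2 : ∀ᶠ t in 𝓝[>] τ, 0 < slope g1 τ t :=
          hev1.filter_mono (nhdsWithin_mono τ fun x hx => hx.ne')
        have h3 : ∀ᶠ t in 𝓝[>] τ, τ < t :=
          Filter.eventually_of_mem self_mem_nhdsWithin fun x hx => hx
        filter_upwards [h2, h3] with t hslope hlt
        rw [slope_def_field, ← h, sub_zero] at hslope
        have h6 := mul_pos hslope (sub_pos.mpr hlt)
        rwa [div_mul_cancel₀ _ (ne_of_gt (sub_pos.mpr hlt))] at h6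
      have combined := hev.and (Filter.eventually_of_mem hIoc fun x hx => hx)
      rw [Filter.eventually_iff, mem_nhdsGT_iff_exists_Ioc_subset] at combined
      obtain ⟨u, hu, hsub⟩ := combined
      have hτu' : τ < min u 1 := lt_min hu hτ.2
      have hu'1 : min u 1 ≤ 1 := min_le_right _ _
      have hsub' : ∀ x ∈ Set.Ioc τ (min u 1), 0 < g1 x ∧ x ∈ Set.Ioc τ 1 :=
        fun x hx => hsub ⟨hx.1, le_trans hx.2 (min_le_left _ _)⟩
      have hmono : StrictMonoOn g (Set.Icc τ (min u 1)) := by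
        apply strictMonoOn_of_deriv_pos (convex_Icc τ (min u 1))
        · exact hcont.mono (Set.Icc_subset_Icc hτ.1 hu'1)
        · intro x hx
          rw [interior_Icc] at hx
          have h5 := hsub' x ⟨hx.1, hx.2.le⟩
          have hxIcc : x ∈ Set.Icc (0:ℝ) 1 := ⟨le_trans hτ.1 hx.1.le, le_trans hx.2.le hu'1⟩
          rw [(hg x hxIcc).deriv]
          exact h5.1
      exact ⟨min u 1, ⟨hτu', hu'1⟩,
        hmono (Set.left_mem_Icc.mpr hτu'.le) (Set.right_mem_Icc.mpr hτu'.le) hτu'⟩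
  by_contra hcon0
  push_neg at hcon0
  obtain ⟨t0, ht0, hgt0⟩ := push 0 ⟨le_refl 0, zero_lt_one⟩ hcon0
  obtain ⟨μ, hμmem, hμmax⟩ := isCompact_Icc.exists_isMaxOn
    (Set.nonempty_Icc.mpr zero_le_one) hcont
  have hmax := isMaxOn_iff.mp hμmax
  have hμval : g 0 < g μ := lt_of_lt_of_le hgt0 (hmax t0 ⟨ht0.1.le, ht0.2⟩)
  have hμ0 : μ ≠ 0 := fun h => by rw [h] at hμval; exact lt_irrefl _ hμval
  have hμ1 : μ ≠ 1 := fun h => by rw [h, ← heq] at hμval; exact lt_irrefl _ hμval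
  have hμIoo : μ ∈ Set.Ioo (0:ℝ) 1 :=
    ⟨lt_of_le_of_ne hμmem.1 (Ne.symm hμ0), lt_of_le_of_ne hμmem.2 hμ1⟩
  have hloc : IsLocalMax g μ := hμmax.isLocalMax (Icc_mem_nhds hμIoo.1 hμIoo.2)
  have hcrit : g1 μ = 0 := by rw [← (hg μ hμmem).deriv]; exact hloc.deriv_eq_zero
  obtain ⟨t, htmem, hgt⟩ := push μ ⟨hμmem.1, hμIoo.2⟩ (le_of_eq hcrit.symm)
  exact absurd (hmax t ⟨le_trans hμmem.1 htmem.1.le, htmem.2⟩) (not_le.mpr hgt)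

end Aux

set_option maxHeartbeats 1600000 in
theorem stmt4 (n : ℕ) (hn : 2 ≤ n) (a : ℝ) (ha0 : 0 < a) (ha1 : a < 1)
    (L Nlo Nhi : Fin n → ℝ) (hL : ∀ i, 0 < L i)
    (hNlo : ∀ i, 1 ≤ Nlo i) (hNhi : ∀ i, Nlo i ≤ Nhi i)
    (xs : Fin n → ℝ) (hxs : ∀ i, 0 < xs i) (hxB : hfun n a xs = 1)
    (ys : Fin n → ℝ) (hys : ∀ i, 0 ≤ ys i) (hyB : hfun n a ys = 1)
    (hne : sVec n a L ys Nhi ≠ sVec n a L xs Nhi) :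
    ∑ i, bvec n L Nhi xs i * sVec n a L ys Nhi i > 1 / ∏ j, (1 + xs j) := by
  classical
  have hx1 : ∀ i, (0:ℝ) < 1 + xs i := fun i => by linarith [hxs i]
  have hy1 : ∀ i, (0:ℝ) < 1 + ys i := fun i => by linarith [hys i]
  have hP : (0:ℝ) < ∏ j, (1 + xs j) := Finset.prod_pos fun j _ => hx1 j
  have hQ : (0:ℝ) < ∏ j, (1 + ys j) := Finset.prod_pos fun j _ => hy1 j
  have hP1 : (1:ℝ) ≤ ∏ j, (1 + xs j) := by
    have h := Finset.prod_le_prod (s := univ) (f := fun _ : Fin n => (1:ℝ)) (g := fun j => 1 + xs j)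
      (fun i _ => zero_le_one) (fun i _ => by show (1:ℝ) ≤ 1 + xs i; linarith [hxs i])
    simpa using h
  have hQ1 : (1:ℝ) ≤ ∏ j, (1 + ys j) := by
    have h := Finset.prod_le_prod (s := univ) (f := fun _ : Fin n => (1:ℝ)) (g := fun j => 1 + ys j)
      (fun i _ => zero_le_one) (fun i _ => by show (1:ℝ) ≤ 1 + ys i; linarith [hys i])
    simpa using h
  have ha' : (0:ℝ) < 1 - a := by linarith
  set P := ∏ j, (1 + xs j) with hPdef
  set Q := ∏ j, (1 + ys j) with hQdef
  set A := ∑ i, ys i / (1 + ys i) with hAdef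
  set B := ∑ i, xs i / (1 + xs i) with hBdef
  have hyBe : A + (1 - a) / Q = 1 := by
    rw [hAdef, hQdef]; simpa [hfun] using hyB
  have hxBe : B + (1 - a) / P = 1 := by
    rw [hBdef, hPdef]; simpa [hfun] using hxB
  have hQdivle : (1 - a) / Q ≤ 1 - a := div_le_self ha'.le hQ1
  have hPdivle : (1 - a) / P ≤ 1 - a := div_le_self ha'.le hP1
  have hQdivpos : 0 < (1 - a) / Q := div_pos ha' hQ
  have hPdivpos : 0 < (1 - a) / P := div_pos ha' hP
  have hApos : 0 < A := by linarith
  have hAlt : A < 1 := by linarith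
  have hBpos : 0 < B := by linarith
  have hBlt : B < 1 := by linarith
  -- single-coordinate rigidity
  have hsingle : ∀ i0 : Fin n, (∀ j, j ≠ i0 → xs j = ys j) → xs i0 = ys i0 := by
    intro i0 hoff
    have hKx : ∏ j ∈ univ.erase i0, (1 + ys j) = ∏ j ∈ univ.erase i0, (1 + xs j) :=
      Finset.prod_congr rfl fun j hj => by rw [hoff j (Finset.ne_of_mem_erase hj)]
    have hK1 : (1:ℝ) ≤ ∏ j ∈ univ.erase i0, (1 + xs j) := by
      have h := Finset.prod_le_prod (s := univ.erase i0) (f := fun _ : Fin n => (1:ℝ))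
        (g := fun j => 1 + xs j) (fun i _ => zero_le_one)
        (fun i _ => by show (1:ℝ) ≤ 1 + xs i; linarith [hxs i])
      simpa using h
    have hKpos : (0:ℝ) < ∏ j ∈ univ.erase i0, (1 + xs j) := lt_of_lt_of_le one_pos hK1
    have hPsplit : P = (1 + xs i0) * ∏ j ∈ univ.erase i0, (1 + xs j) := by
      rw [hPdef]; exact (Finset.mul_prod_erase univ _ (mem_univ i0)).symm
    have hQsplit : Q = (1 + ys i0) * ∏ j ∈ univ.erase i0, (1 + xs j) := by
      rw [hQdef, ← hKx]; exact (Finset.mul_prod_erase univ _ (mem_univ i0)).symm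
    have hBsplit : B = xs i0/(1+xs i0) + ∑ j ∈ univ.erase i0, xs j/(1+xs j) := by
      rw [hBdef]; exact (Finset.add_sum_erase univ _ (mem_univ i0)).symm
    have hAsplit : A = ys i0/(1+ys i0) + ∑ j ∈ univ.erase i0, xs j/(1+xs j) := by
      rw [hAdef, ← Finset.add_sum_erase univ (fun j => ys j/(1+ys j)) (mem_univ i0)]
      congr 1
      exact Finset.sum_congr rfl fun j hj => by rw [hoff j (Finset.ne_of_mem_erase hj)]
    have hsub : xs i0/(1+xs i0) + (1-a)/((1+xs i0) * ∏ j ∈ univ.erase i0, (1 + xs j))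
        = ys i0/(1+ys i0) + (1-a)/((1+ys i0) * ∏ j ∈ univ.erase i0, (1 + xs j)) := by
      have e1 := hxBe
      have e2 := hyBe
      rw [hBsplit, hPsplit] at e1
      rw [hAsplit, hQsplit] at e2
      linarith
    have hx0 := hx1 i0
    have hy0 := hy1 i0
    have hKne : (∏ j ∈ univ.erase i0, (1 + xs j)) ≠ 0 := ne_of_gt hKpos
    have hune : (1 + xs i0) ≠ 0 := ne_of_gt hx0
    have hvne : (1 + ys i0) ≠ 0 := ne_of_gt hy0
    have hfin : (xs i0 - ys i0) * ((∏ j ∈ univ.erase i0, (1 + xs j)) - (1 - a)) = 0 := by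
      have h4 : (xs i0/(1+xs i0) + (1-a)/((1+xs i0) * ∏ j ∈ univ.erase i0, (1 + xs j)))
          * ((1+xs i0)*(1+ys i0)*(∏ j ∈ univ.erase i0, (1 + xs j)))
          = xs i0*(1+ys i0)*(∏ j ∈ univ.erase i0, (1 + xs j)) + (1-a)*(1+ys i0) := by
        field_simp
      have h5 : (ys i0/(1+ys i0) + (1-a)/((1+ys i0) * ∏ j ∈ univ.erase i0, (1 + xs j)))
          * ((1+xs i0)*(1+ys i0)*(∏ j ∈ univ.erase i0, (1 + xs j)))
          = ys i0*(1+xs i0)*(∏ j ∈ univ.erase i0, (1 + xs j)) + (1-a)*(1+xs i0) := by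
        field_simp
      have h6 : xs i0*(1+ys i0)*(∏ j ∈ univ.erase i0, (1 + xs j)) + (1-a)*(1+ys i0)
          = ys i0*(1+xs i0)*(∏ j ∈ univ.erase i0, (1 + xs j)) + (1-a)*(1+xs i0) := by
        rw [← h4, ← h5, hsub]
      linear_combination h6
    rcases mul_eq_zero.mp hfin with h | h
    · linarith [sub_eq_zero.mp h]
    · exfalso; nlinarith
  -- at least two differing coordinates
  have htwo_xy : ∃ i j : Fin n, i ≠ j ∧ xs i ≠ ys i ∧ xs j ≠ ys j := by
    set F := univ.filter (fun i : Fin n => xs i ≠ ys i) with hFdef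
    rcases lt_or_ge F.card 2 with hc | hc
    · exfalso
      interval_cases h : F.card
      · have hall : ∀ i, xs i = ys i := by
          intro i; by_contra hne'
          have hmem : i ∈ F := Finset.mem_filter.mpr ⟨mem_univ i, hne'⟩
          have := Finset.card_ne_zero_of_mem hmem
          omega
        exact hne (by rw [show ys = xs from funext fun i => (hall i).symm])
      · obtain ⟨i0, hF⟩ := Finset.card_eq_one.mp h
        have hoff : ∀ j, j ≠ i0 → xs j = ys j := by
          intro j hj; by_contra hne'
          have hmem : j ∈ F := Finset.mem_filter.mpr ⟨mem_univ j, hne'⟩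
          rw [hF] at hmem; exact hj (Finset.mem_singleton.mp hmem)
        have heq0 := hsingle i0 hoff
        have hi0 : i0 ∈ F := by rw [hF]; exact Finset.mem_singleton_self i0
        exact (Finset.mem_filter.mp hi0).2 heq0
    · obtain ⟨i, hi, j, hj, hij⟩ := Finset.one_lt_card.mp hc
      exact ⟨i, j, hij, (Finset.mem_filter.mp hi).2, (Finset.mem_filter.mp hj).2⟩
  -- the one-dimensional setup
  set c : Fin n → ℝ := fun i => ys i/(1+ys i) - xs i/(1+xs i) with hcdef
  have hcsum : ∑ i, c i = A - B := by
    simp only [hcdef]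
    rw [Finset.sum_sub_distrib, hAdef, hBdef]
  have hcne : ∀ i, xs i ≠ ys i → c i ≠ 0 := by
    intro i hxi hc0
    apply hxi
    have h1 := hx1 i
    have h2 := hy1 i
    have hc0' : ys i/(1+ys i) - xs i/(1+xs i) = 0 := by simpa [hcdef] using hc0
    have h4 : (ys i/(1+ys i) - xs i/(1+xs i)) * ((1+ys i)*(1+xs i)) = 0 := by
      rw [hc0']; ring
    have e5 : (ys i/(1+ys i) - xs i/(1+xs i)) * ((1+ys i)*(1+xs i))
        = ys i * (1+xs i) - xs i * (1+ys i) := by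
      field_simp
    have h5 : ys i * (1+xs i) - xs i * (1+ys i) = 0 := by rw [← e5, h4]
    linear_combination -h5
  set l0 : ℝ → ℝ := fun t => 1 - A + t * (A - B) with hl0def
  set li : Fin n → ℝ → ℝ := fun i t => 1 - ys i/(1+ys i) + t * (c i) with hlidef
  set g : ℝ → ℝ := fun t => Real.log (l0 t) - ∑ i, Real.log (li i t) with hgdef
  set g1 : ℝ → ℝ := fun t => (A - B)/(l0 t) - ∑ i, (c i)/(li i t) with hg1def
  set g2 : ℝ → ℝ := fun t => -((A-B)^2/(l0 t)^2) + ∑ i, (c i)^2/(li i t)^2 with hg2def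
  have hαnn : ∀ i, 0 ≤ ys i/(1+ys i) := fun i => div_nonneg (hys i) (hy1 i).le
  have hαlt : ∀ i, ys i/(1+ys i) < 1 := fun i => by rw [div_lt_one (hy1 i)]; linarith
  have hβnn : ∀ i, 0 ≤ xs i/(1+xs i) := fun i => div_nonneg (hxs i).le (hx1 i).le
  have hβlt : ∀ i, xs i/(1+xs i) < 1 := fun i => by rw [div_lt_one (hx1 i)]; linarith
  have hl0pos : ∀ t ∈ Set.Icc (0:ℝ) 1, 0 < l0 t := by
    intro t ht
    have hrw : l0 t = (1-t)*(1-A) + t*(1-B) := by simp only [hl0def]; ring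
    rw [hrw]; exact convex_pos (by linarith) (by linarith) ht
  have hlipos : ∀ (i : Fin n), ∀ t ∈ Set.Icc (0:ℝ) 1, 0 < li i t := by
    intro i t ht
    have hrw : li i t = (1-t)*(1 - ys i/(1+ys i)) + t*(1 - xs i/(1+xs i)) := by
      simp only [hlidef, hcdef]; ring
    rw [hrw]; exact convex_pos (by linarith [hαlt i]) (by linarith [hβlt i]) ht
  have hl0d : ∀ t : ℝ, HasDerivAt l0 (A - B) t := by
    intro t
    rw [hl0def]
    exact (hasDerivAt_mul_const (A - B)).const_add (1 - A)
  have hlid : ∀ (i : Fin n) (t : ℝ), HasDerivAt (li i) (c i) t := by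
    intro i t
    simp only [hlidef]
    exact (hasDerivAt_mul_const (c i)).const_add _
  have hgd : ∀ t ∈ Set.Icc (0:ℝ) 1, HasDerivAt g (g1 t) t := by
    intro t ht
    have h0 : HasDerivAt (fun u => Real.log (l0 u)) ((A-B)/(l0 t)) t :=
      (hl0d t).log (ne_of_gt (hl0pos t ht))
    have hsum : HasDerivAt (fun u => ∑ i, Real.log (li i u)) (∑ i, (c i)/(li i t)) t :=
      HasDerivAt.fun_sum fun i _ => (hlid i t).log (ne_of_gt (hlipos i t ht))
    have h2 := h0.sub hsum
    rw [hgdef, hg1def]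
    exact h2
  have hg1d : ∀ t ∈ Set.Icc (0:ℝ) 1, HasDerivAt g1 (g2 t) t := by
    intro t ht
    have hl0ne := ne_of_gt (hl0pos t ht)
    have h0 : HasDerivAt (fun u => (A-B)/(l0 u)) (-((A-B)^2/(l0 t)^2)) t := by
      have h1 := (hasDerivAt_const t (A-B)).div (hl0d t) hl0ne
      exact h1.congr_deriv (by ring)
    have hsum : HasDerivAt (fun u => ∑ i, (c i)/(li i u)) (∑ i, -((c i)^2/(li i t)^2)) t := by
      refine HasDerivAt.fun_sum fun i _ => ?_
      have h1 := (hasDerivAt_const t (c i)).div (hlid i t) (ne_of_gt (hlipos i t ht))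
      exact h1.congr_deriv (by ring)
    have h2 := h0.sub hsum
    rw [hg1def, hg2def]
    exact h2.congr_deriv (by rw [Finset.sum_neg_distrib]; ring)
  have hkey : ∀ t ∈ Set.Icc (0:ℝ) 1, g1 t = 0 → 0 < g2 t := by
    intro t ht hzero
    have hl0p := hl0pos t ht
    have hlip := fun i => hlipos i t ht
    set ρ : Fin n → ℝ := fun i => (1-t) * (ys i/(1+ys i)) + t * (xs i/(1+xs i)) with hρdef
    set e : Fin n → ℝ := fun i => (- c i)/(li i t) with hedef
    have hρnn : ∀ i, 0 ≤ ρ i := by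
      intro i
      simp only [hρdef]
      exact add_nonneg (mul_nonneg (by linarith [ht.2]) (hαnn i)) (mul_nonneg ht.1 (hβnn i))
    have hρli : ∀ i, ρ i = 1 - li i t := by
      intro i; simp only [hρdef, hlidef, hcdef]; ring
    have hσ : ∑ j, ρ j = (1-t)*A + t*B := by
      simp only [hρdef]
      rw [Finset.sum_add_distrib, ← Finset.mul_sum, ← Finset.mul_sum, hAdef, hBdef]
    have hσpos : 0 < ∑ j, ρ j := by rw [hσ]; exact convex_pos hApos hBpos ht
    have hl0ρ : l0 t = 1 - ((1-t)*A + t*B) := by simp only [hl0def]; ring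
    have hgap : ∀ i, (∑ j, ρ j) - ρ i = li i t - l0 t := by
      intro i; rw [hρli i, hσ, hl0ρ]; ring
    have heli : ∀ i, e i * (li i t) = - c i := by
      intro i; simp only [hedef]
      exact div_mul_cancel₀ _ (ne_of_gt (hlip i))
    have hesum : ∑ i, e i = (B - A)/(l0 t) := by
      have h3 : (A-B)/(l0 t) - ∑ i, (c i)/(li i t) = 0 := by
        rw [hg1def] at hzero; exact hzero
      have h5 : ∑ i, c i/(li i t) = (A-B)/(l0 t) := by linarith
      have h4 : ∑ i, e i = - ∑ i, (c i)/(li i t) := by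
        rw [← Finset.sum_neg_distrib]
        exact Finset.sum_congr rfl fun i _ => by simp only [hedef]; rw [neg_div]
      rw [h4, h5]
      ring
    have hcon : ∑ i, e i * ((∑ j, ρ j) - ρ i) = 0 := by
      have h6 : ∀ i ∈ univ, e i * ((∑ j, ρ j) - ρ i) = (- c i) - (l0 t) * e i := by
        intro i _
        rw [hgap i, mul_sub, heli i]; ring
      rw [Finset.sum_congr rfl h6, Finset.sum_sub_distrib, ← Finset.mul_sum, hesum,
        Finset.sum_neg_distrib, hcsum]
      field_simp
      ring
    have htwo_e : ∃ i j, i ≠ j ∧ e i ≠ 0 ∧ e j ≠ 0 := by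
      obtain ⟨i, j, hij, hi, hj⟩ := htwo_xy
      exact ⟨i, j, hij,
        by simp only [hedef]; exact div_ne_zero (neg_ne_zero.mpr (hcne i hi)) (ne_of_gt (hlip i)),
        by simp only [hedef]; exact div_ne_zero (neg_ne_zero.mpr (hcne j hj)) (ne_of_gt (hlip j))⟩
    have hcs := cs_key ρ e hρnn hσpos hcon htwo_e
    have he2 : ∀ i ∈ univ, e i ^ 2 = (c i)^2/(li i t)^2 := by
      intro i _
      simp only [hedef]
      rw [div_pow, neg_sq]
    have hsum2 : ∑ i, e i ^ 2 = ∑ i, (c i)^2/(li i t)^2 := Finset.sum_congr rfl he2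
    have hs2 : (∑ i, e i)^2 = (A-B)^2/(l0 t)^2 := by
      rw [hesum, div_pow]
      congr 1
      ring
    simp only [hg2def]
    rw [← hsum2, ← hs2]
    linarith
  have hinv0 : ∀ i, (1:ℝ) - ys i/(1+ys i) = (1+ys i)⁻¹ := by
    intro i
    have h := (hy1 i).ne'
    field_simp
    ring
  have hinv1 : ∀ i, (1:ℝ) - xs i/(1+xs i) = (1+xs i)⁻¹ := by
    intro i
    have h := (hx1 i).ne'
    field_simp
    ring
  have hli0 : ∀ i, li i 0 = 1 - ys i/(1+ys i) := by
    intro i; simp [hlidef]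
  have hli1 : ∀ i, li i 1 = 1 - xs i/(1+xs i) := by
    intro i; simp only [hlidef, hcdef, one_mul]; ring
  have hg0 : g 0 = Real.log (1 - a) := by
    simp only [hgdef]
    have h1 : l0 0 = (1-a)/Q := by
      simp only [hl0def, zero_mul, add_zero]
      linarith
    have h2 : ∀ i ∈ univ, Real.log (li i 0) = - Real.log (1 + ys i) := by
      intro i _
      rw [hli0 i, hinv0 i, Real.log_inv]
    rw [h1, Finset.sum_congr rfl h2, Finset.sum_neg_distrib,
      Real.log_div (ne_of_gt ha') (ne_of_gt hQ), hQdef,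
      Real.log_prod (fun j _ => ne_of_gt (hy1 j))]
    ring
  have hg1v : g 1 = Real.log (1 - a) := by
    simp only [hgdef]
    have h1 : l0 1 = (1-a)/P := by
      simp only [hl0def, one_mul]
      linarith
    have h2 : ∀ i ∈ univ, Real.log (li i 1) = - Real.log (1 + xs i) := by
      intro i _
      rw [hli1 i, hinv1 i, Real.log_inv]
    rw [h1, Finset.sum_congr rfl h2, Finset.sum_neg_distrib,
      Real.log_div (ne_of_gt ha') (ne_of_gt hP), hPdef,
      Real.log_prod (fun j _ => ne_of_gt (hx1 j))]
    ring
  have hmain := oneD g g1 g2 hgd hg1d hkey (hg0.trans hg1v.symm)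
  -- unwind g1 0 < 0 to the key inequality
  set T := ∑ i, ys i/(1+xs i) with hTdef
  have hterm : ∀ i ∈ univ, (c i)/(li i 0) = ys i/(1+xs i) - xs i/(1+xs i) := by
    intro i _
    rw [hli0 i]
    simp only [hcdef]
    have h1 := hx1 i
    have h2 := hy1 i
    field_simp
    ring
  have hg10 : g1 0 = (A-B)/(1-A) - (T - B) := by
    simp only [hg1def]
    have h1 : l0 0 = 1 - A := by simp [hl0def]
    rw [h1, Finset.sum_congr rfl hterm, Finset.sum_sub_distrib, ← hTdef, ← hBdef]
  have hratio : (A-B)/(1-A) = Q/P - 1 := by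
    rw [show A - B = (1-a)/P - (1-a)/Q by linarith,
      show 1 - A = (1-a)/Q by linarith]
    have h1 : ((1:ℝ)-a) ≠ 0 := ne_of_gt ha'
    have h2 : P ≠ 0 := ne_of_gt hP
    have h3 : Q ≠ 0 := ne_of_gt hQ
    have h4 : (1-a)/Q ≠ 0 := ne_of_gt hQdivpos
    rw [div_eq_iff h4]
    field_simp
  have hT : Q/P - (1-a)/P < T := by
    rw [hg10, hratio] at hmain
    linarith
  have hKI : Q - (1-a) < T * P := by
    rw [div_sub_div_same] at hT
    exact (div_lt_iff₀ hP).mp hT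
  -- final assembly
  have hSN : 0 ≤ ∑ k, (Nhi k - 1) * ys k := Finset.sum_nonneg fun k _ =>
    mul_nonneg (by linarith [hNlo k, hNhi k]) (hys k)
  have hXval : Xfun n a ys Nhi = a + (∑ k, (Nhi k - 1) * ys k) + Q - 1 := by
    simp only [Xfun]
    rfl
  have hXpos : 0 < Xfun n a ys Nhi := by
    rw [hXval]; linarith
  have hterm2 : ∀ i ∈ univ, bvec n L Nhi xs i * sVec n a L ys Nhi i
      = ((Nhi i - 1) * ys i / P + ys i/(1+xs i)) / Xfun n a ys Nhi := by
    intro i _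
    simp only [bvec, sVec]
    rw [← hPdef]
    have hLi := hL i
    have hNi : (0:ℝ) < Nhi i := by linarith [hNlo i, hNhi i]
    have hXne := ne_of_gt hXpos
    have hx0 := hx1 i
    field_simp
  rw [Finset.sum_congr rfl hterm2, ← Finset.sum_div, Finset.sum_add_distrib,
    ← Finset.sum_div, ← hTdef]
  rw [gt_iff_lt, div_lt_div_iff₀ hP hXpos, hXval]
  have hcancel : ((∑ k, (Nhi k - 1) * ys k)/P + T) * P
      = (∑ k, (Nhi k - 1) * ys k) + T * P := by
    field_simp
  rw [hcancel, one_mul]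
  linarith
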